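/- Let (G,·,∘) be a finite skew brace. Then the number of group operations ·' on G such that (G,·',∘) is a skew brace isomorphic as a skew brace to (G,·,∘) equals |Aut(G,∘)| / |Aut(G,·,∘)|; equivalently, this number multiplied by |Aut(G,·,∘)| equals |Aut(G,∘)|. -/

import Mathlib

def IsSkewBrace {G : Type*} (dot circ : Group G) : Prop :=
  ∀ σ τ κ : G,
    circ.mul σ (dot.mul τ κ) =
      dot.mul (dot.mul (circ.mul σ τ) (dot.inv σ)) (circ.mul σ κ)

def gammaFun {G : Type*} (dot circ : Group G) (σ τ : G) : G :=
  dot.mul (dot.inv σ) (circ.mul σ τ)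

def IsSubgroupOf {G : Type*} (S : Group G) (H : Set G) : Prop :=
  S.one ∈ H ∧ (∀ a ∈ H, ∀ b ∈ H, S.mul a b ∈ H) ∧ (∀ a ∈ H, S.inv a ∈ H)

def IsLeftIdeal {G : Type*} (dot circ : Group G) (H : Set G) : Prop :=
  IsSubgroupOf dot H ∧ ∀ σ : G, ∀ τ ∈ H, gammaFun dot circ σ τ ∈ H

def IsStrongLeftIdeal {G : Type*} (dot circ : Group G) (H : Set G) : Prop :=
  IsLeftIdeal dot circ H ∧
    ∀ σ : G, ∀ τ ∈ H, dot.mul (dot.mul σ τ) (dot.inv σ) ∈ H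

def IsCharacteristicSubgroupOf {G : Type*} (S : Group G) (H : Set G) : Prop :=
  IsSubgroupOf S H ∧
    ∀ f : G ≃ G, (∀ a b : G, f (S.mul a b) = S.mul (f a) (f b)) → ∀ a ∈ H, f a ∈ H

def oppGroup {G : Type*} (dot : Group G) : Group G :=
  letI := dot
  { mul := fun a b => b * a
    one := (1 : G)
    inv := fun a => a⁻¹
    div := fun a b => b⁻¹ * a
    div_eq_mul_inv := fun _ _ => rfl
    mul_assoc := fun a b c => (mul_assoc c b a).symm
    one_mul := fun a => mul_one a
    mul_one := fun a => one_mul a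
    inv_mul_cancel := fun a => mul_inv_cancel a
    npow := fun n x => @npowRec G ⟨(1 : G)⟩ ⟨fun a b => b * a⟩ n x
    zpow := fun n x => @zpowRec G ⟨(1 : G)⟩ ⟨fun a b => b * a⟩ ⟨fun a => a⁻¹⟩
      (@npowRec G ⟨(1 : G)⟩ ⟨fun a b => b * a⟩) n x
    npow_zero := fun _ => rfl
    npow_succ := fun _ _ => rfl
    zpow_zero' := fun _ => rfl
    zpow_succ' := fun _ _ => rfl
    zpow_neg' := fun _ _ => rfl }

def lam {G : Type*} (S : Group G) (σ : G) : Equiv.Perm G :=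
  letI := S; Equiv.mulLeft σ

def rho {G : Type*} (S : Group G) (σ : G) : Equiv.Perm G :=
  letI := S; Equiv.mulRight σ⁻¹

section Aux

variable {G : Type*}

/-- Transport of a group structure along a permutation. -/
def transpGroup (f : Equiv.Perm G) (d : Group G) : Group G :=
  letI := d
  { mul := fun a b => f (f.symm a * f.symm b)
    one := f 1
    inv := fun a => f ((f.symm a)⁻¹)
    div := fun a b => f (f.symm a * (f.symm b)⁻¹)
    div_eq_mul_inv := fun a b => by
      show f (f.symm a * (f.symm b)⁻¹) = f (f.symm a * f.symm (f ((f.symm b)⁻¹)))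
      rw [Equiv.symm_apply_apply]
    mul_assoc := fun a b c => by
      show f (f.symm (f (f.symm a * f.symm b)) * f.symm c)
          = f (f.symm a * f.symm (f (f.symm b * f.symm c)))
      rw [Equiv.symm_apply_apply, Equiv.symm_apply_apply, mul_assoc]
    one_mul := fun a => by
      show f (f.symm (f 1) * f.symm a) = a
      rw [Equiv.symm_apply_apply, one_mul, Equiv.apply_symm_apply]
    mul_one := fun a => by
      show f (f.symm a * f.symm (f 1)) = a
      rw [Equiv.symm_apply_apply, mul_one, Equiv.apply_symm_apply]
    inv_mul_cancel := fun a => by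
      show f (f.symm (f ((f.symm a)⁻¹)) * f.symm a) = f 1
      rw [Equiv.symm_apply_apply, inv_mul_cancel]
    npow := fun n x => @npowRec G ⟨f 1⟩ ⟨fun a b => f (f.symm a * f.symm b)⟩ n x
    zpow := fun n x => @zpowRec G ⟨f 1⟩ ⟨fun a b => f (f.symm a * f.symm b)⟩
      ⟨fun a => f ((f.symm a)⁻¹)⟩
      (@npowRec G ⟨f 1⟩ ⟨fun a b => f (f.symm a * f.symm b)⟩) n x
    npow_zero := fun _ => rfl
    npow_succ := fun _ _ => rfl
    zpow_zero' := fun _ => rfl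
    zpow_succ' := fun _ _ => rfl
    zpow_neg' := fun _ _ => rfl }

instance : SMul (Equiv.Perm G) (Group G) := ⟨transpGroup⟩

lemma transp_mul (f : Equiv.Perm G) (d : Group G) (a b : G) :
    (f • d).mul a b = f (d.mul (f.symm a) (f.symm b)) := rfl

lemma transp_inv (f : Equiv.Perm G) (d : Group G) (a : G) :
    (f • d).inv a = f (d.inv (f.symm a)) := rfl

instance : MulAction (Equiv.Perm G) (Group G) where
  one_smul d := Group.ext (funext fun _ => funext fun _ => rfl)
  mul_smul f g d := Group.ext (funext fun _ => funext fun _ => rfl)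

/-- inverse of a circ-automorphism is a circ-automorphism -/
lemma symm_hom (circ : Group G) (f : G ≃ G)
    (hf : ∀ a b, f (circ.mul a b) = circ.mul (f a) (f b)) :
    ∀ a b, f.symm (circ.mul a b) = circ.mul (f.symm a) (f.symm b) := fun a b =>
  f.injective (by simp [hf])

/-- The subgroup of `Equiv.Perm G` of automorphisms of `(G, circ)`. -/
def circAut (circ : Group G) : Subgroup (Equiv.Perm G) where
  carrier := {f | ∀ a b, f (circ.mul a b) = circ.mul (f a) (f b)}
  one_mem' := fun _ _ => rfl
  mul_mem' := by
    intro f g hf hg a b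
    exact (congrArg f (hg a b)).trans (hf (g a) (g b))
  inv_mem' := by
    intro f hf a b
    exact symm_hom circ f hf a b

lemma mem_circAut (circ : Group G) (f : Equiv.Perm G) :
    f ∈ circAut circ ↔ ∀ a b, f (circ.mul a b) = circ.mul (f a) (f b) := Iff.rfl

/-- Skew braces transport along circ-automorphisms. -/
lemma skewbrace_transp (dot circ : Group G) (h : IsSkewBrace dot circ)
    (f : Equiv.Perm G) (hf : f ∈ circAut circ) : IsSkewBrace (f • dot) circ := by
  intro σ τ κ
  apply f.symm.injective
  simp only [transp_mul, transp_inv, symm_hom circ f hf, Equiv.symm_apply_apply]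
  exact h _ _ _

lemma smul_eq_iff (dot : Group G) (f : Equiv.Perm G) :
    f • dot = dot ↔ ∀ a b, f (dot.mul a b) = dot.mul (f a) (f b) := by
  constructor
  · intro hfd a b
    conv_rhs => rw [← hfd]
    rw [transp_mul, Equiv.symm_apply_apply, Equiv.symm_apply_apply]
  · intro hf
    refine Group.ext (funext fun a => funext fun b => ?_)
    show (f • dot).mul a b = dot.mul a b
    rw [transp_mul, hf, Equiv.apply_symm_apply, Equiv.apply_symm_apply]

lemma mem_orbit_iff' (dot circ : Group G) (h : IsSkewBrace dot circ) (dot' : Group G) :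
    dot' ∈ MulAction.orbit (circAut circ) dot ↔
      (IsSkewBrace dot' circ ∧
        ∃ f : G ≃ G, (∀ a b : G, f (dot'.mul a b) = dot.mul (f a) (f b)) ∧
          (∀ a b : G, f (circ.mul a b) = circ.mul (f a) (f b))) := by
  constructor
  · rintro ⟨⟨f, hf⟩, rfl⟩
    refine ⟨skewbrace_transp dot circ h f hf, f.symm, fun a b => ?_, symm_hom circ f hf⟩
    show f.symm ((f • dot).mul a b) = dot.mul (f.symm a) (f.symm b)
    rw [transp_mul, Equiv.symm_apply_apply]
  · rintro ⟨-, g, hg1, hg2⟩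
    refine ⟨⟨g.symm, symm_hom circ g hg2⟩, ?_⟩
    refine Group.ext (funext fun a => funext fun b => ?_)
    show (g.symm • dot).mul a b = dot'.mul a b
    rw [transp_mul, Equiv.symm_symm, ← hg1, Equiv.symm_apply_apply]

end Aux

/-- For a finite skew brace `(G,·,∘)`, the number of group operations
`·'` on `G` such that `(G,·',∘)` is a skew brace isomorphic to `(G,·,∘)`, multiplied
by `|Aut(G,·,∘)|`, equals `|Aut(G,∘)|`. -/
theorem stmt3 {G : Type*} [Finite G] (dot circ : Group G) (h : IsSkewBrace dot circ) :
    Nat.card {dot' : Group G // IsSkewBrace dot' circ ∧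
        ∃ f : G ≃ G, (∀ a b : G, f (dot'.mul a b) = dot.mul (f a) (f b)) ∧
          (∀ a b : G, f (circ.mul a b) = circ.mul (f a) (f b))} *
      Nat.card {f : G ≃ G // (∀ a b : G, f (dot.mul a b) = dot.mul (f a) (f b)) ∧
          (∀ a b : G, f (circ.mul a b) = circ.mul (f a) (f b))} =
    Nat.card {f : G ≃ G // ∀ a b : G, f (circ.mul a b) = circ.mul (f a) (f b)} := by
  have e1 : {dot' : Group G // IsSkewBrace dot' circ ∧
        ∃ f : G ≃ G, (∀ a b : G, f (dot'.mul a b) = dot.mul (f a) (f b)) ∧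
          (∀ a b : G, f (circ.mul a b) = circ.mul (f a) (f b))} ≃
      MulAction.orbit (circAut circ) dot :=
    Equiv.subtypeEquivRight fun dot' => (mem_orbit_iff' dot circ h dot').symm
  have e2 : {f : G ≃ G // (∀ a b : G, f (dot.mul a b) = dot.mul (f a) (f b)) ∧
        (∀ a b : G, f (circ.mul a b) = circ.mul (f a) (f b))} ≃
      MulAction.stabilizer (circAut circ) dot :=
    { toFun := fun x => ⟨⟨x.1, x.2.2⟩, by
        have : (⟨x.1, x.2.2⟩ : circAut circ) • dot = dot := (smul_eq_iff dot x.1).2 x.2.1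
        exact this⟩
      invFun := fun y => ⟨y.1.1, (smul_eq_iff dot y.1.1).1 y.2, y.1.2⟩
      left_inv := fun x => rfl
      right_inv := fun y => rfl }
  have e3 : {f : G ≃ G // ∀ a b : G, f (circ.mul a b) = circ.mul (f a) (f b)} ≃
      circAut circ := Equiv.refl _
  rw [Nat.card_congr e1, Nat.card_congr e2, Nat.card_congr e3]
  rw [← Nat.card_prod]
  exact Nat.card_congr (MulAction.orbitProdStabilizerEquivGroup (circAut circ) dot)
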